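/- Consider the set 𝒮 of pairs (x,c) of positive real numbers satisfying κ_1(1 − x²) + x² = 4cT_1 and 2 + x = 4cT_p. Then: (1) if 2nT_p(2T_1 − κ_1T_p) < −d_1T_1², then 𝒮 is empty; (2) if 2nT_p(2T_1 − κ_1T_p) = −d_1T_1² or 2T_1 − κ_1T_p ≥ 0, then 𝒮 contains exactly one element; (3) if −d_1T_1² < 2nT_p(2T_1 − κ_1T_p) < 0, then 𝒮 contains exactly two elements. -/

import Mathlib

/-- Proposition 6.1: count of solutions `(x, c)` (with `x = α₁/β`) of the system equivalent to
`Ric(g) = cT` when the maximal compact subgroup `K` is simple. -/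
theorem stmt_19 (d₁ : ℕ) (hd₁ : 0 < d₁) (κ₁ : ℝ) (hκ₁0 : 0 ≤ κ₁) (hκ₁1 : κ₁ < 1)
    (n : ℝ) (hn : n = 2 * (d₁ : ℝ) * (1 - κ₁))
    (Tp T₁ : ℝ) (hTp : 0 < Tp) (hT₁ : 0 < T₁)
    (𝒮 : Set (ℝ × ℝ))
    (h𝒮 : 𝒮 = {z | 0 < z.1 ∧ 0 < z.2 ∧
        κ₁ * (1 - z.1^2) + z.1^2 = 4 * z.2 * T₁ ∧ 2 + z.1 = 4 * z.2 * Tp}) :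
    (2 * n * Tp * (2 * T₁ - κ₁ * Tp) < -((d₁ : ℝ) * T₁^2) → 𝒮 = ∅) ∧
    ((2 * n * Tp * (2 * T₁ - κ₁ * Tp) = -((d₁ : ℝ) * T₁^2) ∨ 0 ≤ 2 * T₁ - κ₁ * Tp) →
      ∃! z : ℝ × ℝ, z ∈ 𝒮) ∧
    ((-((d₁ : ℝ) * T₁^2) < 2 * n * Tp * (2 * T₁ - κ₁ * Tp) ∧
        2 * n * Tp * (2 * T₁ - κ₁ * Tp) < 0) →
      ∃ z w : ℝ × ℝ, z ∈ 𝒮 ∧ w ∈ 𝒮 ∧ z ≠ w ∧ ∀ u ∈ 𝒮, u = z ∨ u = w) := by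
  have hκ : (0:ℝ) < 1 - κ₁ := by linarith
  have hd : (0:ℝ) < (d₁ : ℝ) := by exact_mod_cast hd₁
  obtain ⟨a, ha_def⟩ : ∃ a : ℝ, a = (1 - κ₁) * Tp := ⟨_, rfl⟩
  have ha : 0 < a := by rw [ha_def]; positivity
  obtain ⟨C, hC_def⟩ : ∃ C : ℝ, C = κ₁ * Tp - 2 * T₁ := ⟨_, rfl⟩
  obtain ⟨D, hD_def⟩ : ∃ D : ℝ, D = T₁^2 - 4 * a * C := ⟨_, rfl⟩
  have hkey : 2 * n * Tp * (2 * T₁ - κ₁ * Tp) + (d₁ : ℝ) * T₁^2 = (d₁ : ℝ) * D := by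
    rw [hn, hD_def, ha_def, hC_def]; ring
  have hmem : ∀ z : ℝ × ℝ, z ∈ 𝒮 ↔
      0 < z.1 ∧ a * (z.1 * z.1) + (-T₁) * z.1 + C = 0 ∧ z.2 = (2 + z.1) / (4 * Tp) := by
    intro z
    rw [h𝒮]; simp only [Set.mem_setOf_eq]
    constructor
    · rintro ⟨hx, _, h1, h2⟩
      have hz2 : z.2 = (2 + z.1) / (4 * Tp) := by field_simp; linarith
      refine ⟨hx, ?_, hz2⟩
      rw [ha_def, hC_def]
      nlinarith [h1, h2]
    · rintro ⟨hx, hq, hz2⟩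
      have hz2pos : 0 < z.2 := by rw [hz2]; positivity
      rw [ha_def, hC_def] at hq
      refine ⟨hx, hz2pos, ?_, ?_⟩
      · rw [hz2]; field_simp; nlinarith [hq]
      · rw [hz2]; field_simp
  have ha' : a ≠ 0 := ne_of_gt ha
  have hsqnn : 0 ≤ Real.sqrt D := Real.sqrt_nonneg D
  refine ⟨?_, ?_, ?_⟩
  · -- D < 0 : empty
    intro h
    have hdD : (d₁ : ℝ) * D < (d₁ : ℝ) * 0 := by rw [mul_zero]; linarith [hkey]
    have hD : D < 0 := (mul_lt_mul_iff_right₀ hd).mp hdD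
    ext z
    simp only [Set.mem_empty_iff_false, iff_false]
    intro hz
    have hq := ((hmem z).mp hz).2.1
    have hnot : ∀ s : ℝ, discrim a (-T₁) C ≠ s ^ 2 := by
      intro s heq
      rw [discrim] at heq
      nlinarith [sq_nonneg s]
    exact quadratic_ne_zero_of_discrim_ne_sq hnot z.1 hq
  · -- unique solution
    rintro h
    have hD : 0 ≤ D := by
      rcases h with h | h
      · have hdD : (d₁ : ℝ) * 0 ≤ (d₁ : ℝ) * D := by rw [mul_zero]; linarith [hkey]
        exact (mul_le_mul_iff_right₀ hd).mp hdD
      · have hCle : C ≤ 0 := by rw [hC_def]; linarith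
        have h2 : 0 ≤ a * (-C) := mul_nonneg ha.le (by linarith)
        rw [hD_def]; nlinarith [sq_nonneg T₁, h2]
    have hs : discrim a (-T₁) C = Real.sqrt D * Real.sqrt D := by
      rw [discrim, Real.mul_self_sqrt hD, hD_def]; ring
    have hsq : Real.sqrt D ^ 2 = D := Real.sq_sqrt hD
    have hroots := fun x : ℝ => quadratic_eq_zero_iff ha' hs x
    simp only [neg_neg] at hroots
    obtain ⟨r, hr_def⟩ : ∃ r : ℝ, r = (T₁ + Real.sqrt D) / (2 * a) := ⟨_, rfl⟩
    rw [← hr_def] at hroots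
    have hrpos : 0 < r := by rw [hr_def]; positivity
    refine ⟨(r, (2 + r) / (4 * Tp)), ?_, ?_⟩
    · exact (hmem _).mpr ⟨hrpos, (hroots r).mpr (Or.inl rfl), rfl⟩
    · rintro ⟨x, c⟩ hz
      obtain ⟨hx, hq, hc⟩ := (hmem _).mp hz
      simp only at hx hq hc
      rw [hroots x] at hq
      have hx1 : x = r := by
        rcases hq with hq | hq
        · exact hq
        · rcases h with h | h
          · have hD0 : D = 0 := by
              have h1 : (d₁ : ℝ) * D ≤ (d₁ : ℝ) * 0 := by rw [mul_zero]; linarith [hkey]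
              have h2 : (d₁ : ℝ) * 0 ≤ (d₁ : ℝ) * D := by rw [mul_zero]; linarith [hkey]
              have := le_antisymm ((mul_le_mul_iff_right₀ hd).mp h1) ((mul_le_mul_iff_right₀ hd).mp h2)
              linarith
            rw [hq, hr_def, hD0, Real.sqrt_zero]
            ring
          · -- C ≤ 0, so T₁ ≤ √D and the small root is ≤ 0, contradiction
            exfalso
            have hCle : C ≤ 0 := by rw [hC_def]; linarith
            have hDge : T₁ ^ 2 ≤ D := by
              have : 0 ≤ a * (-C) := mul_nonneg ha.le (by linarith)
              rw [hD_def]; linarith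
            have hT₁le : T₁ ≤ Real.sqrt D := by
              have h' : T₁ = Real.sqrt (T₁ ^ 2) := (Real.sqrt_sq hT₁.le).symm
              rw [h']
              exact Real.sqrt_le_sqrt hDge
            have : x ≤ 0 := by
              rw [hq]
              apply div_nonpos_of_nonpos_of_nonneg
              · linarith
              · linarith
            linarith
      simp only [Prod.mk.injEq]
      exact ⟨hx1, by rw [hc, hx1]⟩
  · -- two solutions
    rintro ⟨h1, h2⟩
    have hDpos : 0 < D := by
      have : (d₁ : ℝ) * 0 < (d₁ : ℝ) * D := by rw [mul_zero]; linarith [hkey]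
      exact (mul_lt_mul_iff_right₀ hd).mp this
    have hDlt : D < T₁^2 := by
      have : (d₁ : ℝ) * D < (d₁ : ℝ) * T₁^2 := by linarith [hkey]
      exact (mul_lt_mul_iff_right₀ hd).mp this
    have hD : 0 ≤ D := le_of_lt hDpos
    have hs : discrim a (-T₁) C = Real.sqrt D * Real.sqrt D := by
      rw [discrim, Real.mul_self_sqrt hD, hD_def]; ring
    have hsq : Real.sqrt D ^ 2 = D := Real.sq_sqrt hD
    have hroots := fun x : ℝ => quadratic_eq_zero_iff ha' hs x
    simp only [neg_neg] at hroots
    have hsqpos : 0 < Real.sqrt D := Real.sqrt_pos.mpr hDpos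
    have hsqlt : Real.sqrt D < T₁ := by
      have h' : Real.sqrt D < Real.sqrt (T₁ ^ 2) := Real.sqrt_lt_sqrt hD hDlt
      rwa [Real.sqrt_sq hT₁.le] at h'
    obtain ⟨r₁, hr₁_def⟩ : ∃ r : ℝ, r = (T₁ + Real.sqrt D) / (2 * a) := ⟨_, rfl⟩
    obtain ⟨r₂, hr₂_def⟩ : ∃ r : ℝ, r = (T₁ - Real.sqrt D) / (2 * a) := ⟨_, rfl⟩
    rw [← hr₁_def, ← hr₂_def] at hroots
    have hr₁pos : 0 < r₁ := by rw [hr₁_def]; positivity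
    have hr₂pos : 0 < r₂ := by
      rw [hr₂_def]
      apply div_pos (by linarith) (by linarith)
    refine ⟨(r₁, (2 + r₁) / (4 * Tp)), (r₂, (2 + r₂) / (4 * Tp)), ?_, ?_, ?_, ?_⟩
    · exact (hmem _).mpr ⟨hr₁pos, (hroots r₁).mpr (Or.inl rfl), rfl⟩
    · exact (hmem _).mpr ⟨hr₂pos, (hroots r₂).mpr (Or.inr rfl), rfl⟩
    · have hlt : r₂ < r₁ := by
        rw [hr₁_def, hr₂_def]
        exact (div_lt_div_iff_of_pos_right (by linarith)).mpr (by linarith)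
      intro hzw
      have := congrArg Prod.fst hzw
      simp only at this
      linarith [hlt, this.ge, this.le]
    · rintro ⟨x, c⟩ hz
      obtain ⟨hx, hq, hc⟩ := (hmem _).mp hz
      simp only at hx hq hc
      rw [hroots x] at hq
      rcases hq with hq | hq
      · left; simp only [Prod.mk.injEq]; exact ⟨hq, by rw [hc, hq]⟩
      · right; simp only [Prod.mk.injEq]; exact ⟨hq, by rw [hc, hq]⟩
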